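/- The box product is closed: for any graphs F, G, H, the map sending a graph map φ : F □ G → H to the function v ↦ φ(v,−) is a bijection from the set of graph maps F □ G → H to the set of graph maps F → Hom(G,H). -/

import Mathlib

/-- A map of simple graphs: adjacent vertices are sent to equal or adjacent vertices. -/
def IsGraphMap {V W : Type*} (G : SimpleGraph V) (H : SimpleGraph W) (f : V → W) : Prop :=
  ∀ ⦃v w : V⦄, G.Adj v w → f v = f w ∨ H.Adj (f v) (f w)

/-- The hom-graph `Hom(G,H)`: vertices are graph maps `G → H`, and `f ∼ g` iff `f ≠ g` and
for every vertex `v`, either `f v = g v` or `f v ∼ g v` in `H`. -/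
def homGraph {V W : Type*} (G : SimpleGraph V) (H : SimpleGraph W) :
    SimpleGraph {f : V → W // IsGraphMap G H f} where
  Adj f g := f ≠ g ∧ ∀ v : V, f.1 v = g.1 v ∨ H.Adj (f.1 v) (g.1 v)
  symm := by
    constructor
    rintro f g ⟨hne, h⟩
    exact ⟨hne.symm, fun v => (h v).imp Eq.symm SimpleGraph.Adj.symm⟩
  loopless := ⟨fun f h => h.1 rfl⟩

/-- The box product is closed: currying `φ ↦ (v ↦ φ(v,−))` is a bijection from the set of
graph maps `F □ G → H` to the set of graph maps `F → Hom(G,H)`. -/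
theorem boxProd_closed {U V W : Type*} (F : SimpleGraph U) (G : SimpleGraph V)
    (H : SimpleGraph W) :
    ∃ e : {φ : U × V → W // IsGraphMap (F.boxProd G) H φ} ≃
        {ψ : U → {f : V → W // IsGraphMap G H f} // IsGraphMap F (homGraph G H) ψ},
      ∀ (φ : {φ : U × V → W // IsGraphMap (F.boxProd G) H φ}) (u : U) (v : V),
        ((e φ).1 u).1 v = φ.1 (u, v) := by
  refine ⟨{
    toFun := fun φ => ⟨fun u => ⟨fun v => φ.1 (u, v), fun v v' h =>
      φ.2 (by simp [h])⟩, ?_⟩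
    invFun := fun ψ => ⟨fun p => (ψ.1 p.1).1 p.2, ?_⟩
    left_inv := fun φ => rfl
    right_inv := fun ψ => rfl }, fun φ u v => rfl⟩
  · intro u u' h
    by_cases heq : (fun v => φ.1 (u, v)) = fun v => φ.1 (u', v)
    · exact Or.inl (Subtype.ext heq)
    · refine Or.inr (And.intro (fun hc => heq (congrArg Subtype.val hc)) fun v =>
        φ.2 (by simp [h]))
  · rintro ⟨u, v⟩ ⟨u', v'⟩ h
    rcases h with ⟨hF, rfl⟩ | ⟨hG, rfl⟩
    · rcases ψ.2 hF with heq | hadj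
      · exact Or.inl (congrFun (congrArg Subtype.val heq) v)
      · exact And.right hadj v
    · exact (ψ.1 u).2 hG
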